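/- Let (X, d) be a metric space, T : X → X non-expanding, and u ∈ X such that the ω-limit set ω(u) (the set of limit points of the sequence (T^n u)) is nonempty and compact. Then for every v ∈ ω(u), the closure of the forward orbit {T^n v : n ∈ ℕ} equals ω(u); in particular ω(v) = ω(u). -/

import Mathlib

/-- The ω-limit set of `u` under iteration of `T`. -/
def omegaSet {X : Type*} [MetricSpace X] (T : X → X) (u : X) : Set X :=
  {v | ∃ k : ℕ → ℕ, StrictMono k ∧
    Filter.Tendsto (fun n => T^[k n] u) Filter.atTop (nhds v)}

open Filter Topology

lemma iter_ne {X : Type*} [MetricSpace X] (T : X → X)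
    (hne : ∀ x y : X, dist (T x) (T y) ≤ dist x y) (j : ℕ) (x y : X) :
    dist (T^[j] x) (T^[j] y) ≤ dist x y := by
  induction j with
  | zero => simp
  | succ n ih =>
      rw [Function.iterate_succ_apply', Function.iterate_succ_apply']
      exact le_trans (hne _ _) ih

lemma key_approx {X : Type*} [MetricSpace X] (T : X → X)
    (hne : ∀ x y : X, dist (T x) (T y) ≤ dist x y) (u : X)
    {v w : X} (hv : v ∈ omegaSet T u) (hw : w ∈ omegaSet T u) :
    ∀ ε > 0, ∀ N : ℕ, ∃ j ≥ N, dist (T^[j] v) w < ε := by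
  obtain ⟨k, hk, hkt⟩ := hv
  obtain ⟨m, hm, hmt⟩ := hw
  intro ε hε N
  rw [Metric.tendsto_atTop] at hkt hmt
  obtain ⟨n₀, hn₀⟩ := hkt (ε / 2) (by linarith)
  obtain ⟨n₁, hn₁⟩ := hmt (ε / 2) (by linarith)
  -- choose n₂ ≥ n₁ with m n₂ ≥ k n₀ + N
  obtain ⟨n₂, hn₂⟩ : ∃ n₂, n₂ ≥ n₁ ∧ m n₂ ≥ k n₀ + N :=
    ⟨max n₁ (k n₀ + N), le_max_left _ _,
      le_trans (le_max_right _ _) (hm.le_apply.trans (le_refl _))⟩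
  refine ⟨m n₂ - k n₀, by omega, ?_⟩
  have h1 : dist (T^[m n₂ - k n₀] v) (T^[m n₂] u) < ε / 2 := by
    have : T^[m n₂] u = T^[m n₂ - k n₀] (T^[k n₀] u) := by
      rw [← Function.iterate_add_apply]
      congr 1
      omega
    rw [this]
    calc dist (T^[m n₂ - k n₀] v) (T^[m n₂ - k n₀] (T^[k n₀] u)) ≤ dist v (T^[k n₀] u) :=
          iter_ne T hne _ _ _
      _ < ε / 2 := by rw [dist_comm]; exact hn₀ n₀ le_rfl
  have h2 : dist (T^[m n₂] u) w < ε / 2 := hn₁ n₂ hn₂.1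
  calc dist (T^[m n₂ - k n₀] v) w ≤ dist (T^[m n₂ - k n₀] v) (T^[m n₂] u) + dist (T^[m n₂] u) w :=
        dist_triangle _ _ _
    _ < ε := by linarith

lemma orbit_mem {X : Type*} [MetricSpace X] (T : X → X)
    (hne : ∀ x y : X, dist (T x) (T y) ≤ dist x y) (u : X)
    {v : X} (hv : v ∈ omegaSet T u) (j : ℕ) : T^[j] v ∈ omegaSet T u := by
  obtain ⟨k, hk, hkt⟩ := hv
  refine ⟨fun n => k n + j, fun a b hab => by have := hk hab; dsimp only; omega, ?_⟩
  have hTc : Continuous (T^[j]) := by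
    have : LipschitzWith 1 T := LipschitzWith.of_dist_le_mul (by simpa using hne)
    exact (this.iterate j).continuous
  have h := (hTc.continuousAt (x := v)).tendsto.comp hkt
  have heq : (fun n => T^[k n + j] u) = T^[j] ∘ fun n => T^[k n] u := by
    funext n
    simp [Function.comp, add_comm (k n) j, Function.iterate_add_apply]
  rw [heq]
  exact h

theorem stmt_2 {X : Type*} [MetricSpace X] (T : X → X)
    (hne : ∀ x y : X, dist (T x) (T y) ≤ dist x y) (u : X)
    (hnonempty : (omegaSet T u).Nonempty) (hcomp : IsCompact (omegaSet T u)) :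
    ∀ v ∈ omegaSet T u,
      closure {y | ∃ n : ℕ, y = T^[n] v} = omegaSet T u ∧
      omegaSet T v = omegaSet T u := by
  intro v hv
  have hclosed : IsClosed (omegaSet T u) := hcomp.isClosed
  have horb : {y | ∃ n : ℕ, y = T^[n] v} ⊆ omegaSet T u := by
    rintro y ⟨n, rfl⟩; exact orbit_mem T hne u hv n
  have hsub : closure {y | ∃ n : ℕ, y = T^[n] v} ⊆ omegaSet T u :=
    hclosed.closure_subset_iff.mpr horb
  have hmem_omega_v : ∀ w ∈ omegaSet T u, w ∈ omegaSet T v := by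
    intro w hw
    have hcl : MapClusterPt w atTop (fun n => T^[n] v) := by
      rw [mapClusterPt_iff_frequently]
      intro s hs
      rw [Metric.mem_nhds_iff] at hs
      obtain ⟨ε, hε, hball⟩ := hs
      rw [Filter.frequently_atTop]
      intro N
      obtain ⟨j, hjN, hj⟩ := key_approx T hne u hv hw ε hε N
      exact ⟨j, hjN, hball hj⟩
    obtain ⟨ψ, hψ, hψt⟩ := TopologicalSpace.FirstCountableTopology.tendsto_subseq hcl
    exact ⟨ψ, hψ, hψt⟩
  have hsup : omegaSet T u ⊆ closure {y | ∃ n : ℕ, y = T^[n] v} := by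
    intro w hw
    rw [Metric.mem_closure_iff]
    intro ε hε
    obtain ⟨j, _, hj⟩ := key_approx T hne u hv hw ε hε 0
    exact ⟨T^[j] v, ⟨j, rfl⟩, by rwa [dist_comm]⟩
  refine ⟨le_antisymm hsub hsup, le_antisymm ?_ (fun w hw => hmem_omega_v w hw)⟩
  -- omegaSet T v ⊆ omegaSet T u
  intro w hw
  obtain ⟨k, hk, hkt⟩ := hw
  have : ∀ n, T^[k n] v ∈ omegaSet T u := fun n => orbit_mem T hne u hv (k n)
  exact hclosed.mem_of_tendsto hkt (Filter.Eventually.of_forall this)
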